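/- Dual error bound for Case II: with (x, y) the exact solution of A*y + i x = f, Ax = y, for any ỹ ∈ D(A*) and any φ ∈ D(A): ‖y − ỹ‖² + ‖A*(y − ỹ)‖² ≤ 2(‖f − i φ − A*ỹ‖² + ‖ỹ − Aφ‖²). -/

import Mathlib

open scoped ComplexInnerProductSpace

lemma stmt_14_aux (a b n : ℝ) (hn : 0 ≤ n) (h : n ^ 2 = a ^ 2 + b ^ 2) :
    a + b ≤ Real.sqrt 2 * n := by
  rcases le_or_gt (a + b) 0 with h0 | h0
  · exact h0.trans (mul_nonneg (Real.sqrt_nonneg 2) hn)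
  · have h1 : (a + b) ^ 2 ≤ 2 * n ^ 2 := by nlinarith [sq_nonneg (a - b)]
    have h2 : a + b = Real.sqrt ((a + b) ^ 2) := (Real.sqrt_sq h0.le).symm
    rw [h2]
    have h3 : Real.sqrt ((a + b) ^ 2) ≤ Real.sqrt (2 * n ^ 2) := Real.sqrt_le_sqrt h1
    have h4 : Real.sqrt (2 * n ^ 2) = Real.sqrt 2 * n := by
      rw [Real.sqrt_mul (by norm_num), Real.sqrt_sq hn]
    rw [← h4]; exact h3

/-- Abstract inner-product inequality behind the dual error bound. -/
lemma stmt_14_key {H1 H2 : Type*} [NormedAddCommGroup H1] [InnerProductSpace ℂ H1]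
    [NormedAddCommGroup H2] [InnerProductSpace ℂ H2]
    (u w : H1) (v z : H2) (hz : ⟪u, w⟫ = ⟪v, z⟫) :
    ‖v‖ ^ 2 + ‖u‖ ^ 2 ≤ 2 * (‖u + Complex.I • w‖ ^ 2 + ‖z - v‖ ^ 2) := by
  have e1 : ‖u + Complex.I • w‖ ^ 2
      = ‖u‖ ^ 2 + 2 * (Complex.I * ⟪u, w⟫).re + ‖w‖ ^ 2 := by
    rw [@norm_add_sq ℂ]
    simp [inner_smul_right, norm_smul]
  have e2 : ‖z - v‖ ^ 2 = ‖z‖ ^ 2 - 2 * (⟪u, w⟫ : ℂ).re + ‖v‖ ^ 2 := by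
    rw [@norm_sub_sq ℂ]
    have hrev : RCLike.re (⟪z, v⟫ : ℂ) = (⟪u, w⟫ : ℂ).re := by
      rw [inner_re_symm, ← hz]; rfl
    rw [hrev]
  have hb1 : ‖(⟪u, w⟫ : ℂ)‖ ≤ ‖u‖ * ‖w‖ := norm_inner_le_norm u w
  have hb2 : ‖(⟪u, w⟫ : ℂ)‖ ≤ ‖v‖ * ‖z‖ := by
    rw [hz]; exact norm_inner_le_norm v z
  have hsq : ‖(⟪u, w⟫ : ℂ)‖ ^ 2 = (⟪u, w⟫ : ℂ).re ^ 2 + (⟪u, w⟫ : ℂ).im ^ 2 := by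
    rw [Complex.sq_norm, Complex.normSq_apply]; ring
  have hcross := stmt_14_aux (⟪u, w⟫ : ℂ).re (⟪u, w⟫ : ℂ).im ‖(⟪u, w⟫ : ℂ)‖
    (norm_nonneg _) hsq
  have hre : (Complex.I * (⟪u, w⟫ : ℂ)).re = -(⟪u, w⟫ : ℂ).im := by simp
  have hs2nn : (0:ℝ) ≤ Real.sqrt 2 := Real.sqrt_nonneg 2
  have hm1 := mul_le_mul_of_nonneg_left hb1 hs2nn
  have hm2 := mul_le_mul_of_nonneg_left hb2 hs2nn
  rw [e1, e2, hre]
  nlinarith [sq_nonneg (‖u‖ - Real.sqrt 2 * ‖w‖), sq_nonneg (‖v‖ - Real.sqrt 2 * ‖z‖),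
    Real.sq_sqrt (show (0:ℝ) ≤ 2 by norm_num)]

/-- Dual error bound for Case II. -/
theorem stmt_14
    {H1 H2 : Type*} [NormedAddCommGroup H1] [InnerProductSpace ℂ H1] [CompleteSpace H1]
    [NormedAddCommGroup H2] [InnerProductSpace ℂ H2] [CompleteSpace H2]
    (A : H1 →ₗ.[ℂ] H2) (hd : Dense (A.domain : Set H1)) (hc : A.IsClosed)
    (f : H1) (x : A.domain) (y : A.adjoint.domain)
    (h1 : A.adjoint y + Complex.I • (x : H1) = f) (h2 : A x = (y : H2))
    (yt : A.adjoint.domain) (φ : A.domain) :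
    ‖(y : H2) - (yt : H2)‖ ^ 2 + ‖A.adjoint (y - yt)‖ ^ 2
      ≤ 2 * (‖f - Complex.I • (φ : H1) - A.adjoint yt‖ ^ 2 + ‖(yt : H2) - A φ‖ ^ 2) := by
  set e : A.adjoint.domain := y - yt with he
  set d : A.domain := x - φ with hded
  have hAe : A.adjoint e = A.adjoint y - A.adjoint yt := by exact A.adjoint.map_sub y yt
  have hr1 : f - Complex.I • (φ : H1) - A.adjoint yt
      = A.adjoint e + Complex.I • ((d : H1)) := by
    rw [hAe, ← h1, hded]
    push_cast
    rw [smul_sub]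
    abel
  have hAd : A d = A x - A φ := by exact A.map_sub x φ
  have hr2 : (yt : H2) - A φ = A d - (e : H2) := by
    rw [hAd, h2, he]
    push_cast
    abel
  have hfa := LinearPMap.adjoint_isFormalAdjoint hd e d
  have key := stmt_14_key (A.adjoint e) ((d : H1)) ((e : H2)) (A d) hfa
  rw [hr1, hr2]
  have hecast : (y : H2) - (yt : H2) = (e : H2) := by rw [he]; push_cast; ring
  rw [hecast]
  exact key
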